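/- Let g ≥ 3 be an integer and let G be a simple graph on N ≥ 3 vertices in which every vertex has degree exactly 2 and whose girth is at least g. Consider the (1,2)-TSP instance on V(G) in which c(u,v) = 1 if {u,v} ∈ E(G) and c(u,v) = 2 for all other pairs u ≠ v. Then this instance has a tour of cost at most N + N/g. -/

import Mathlib

open Finset

section TSP

variable {V : Type} [Fintype V] [DecidableEq V]

/-- A tour is a Hamiltonian cycle, modeled as a cyclic permutation of all vertices. -/
def IsTour (T : Equiv.Perm V) : Prop :=
  T.IsCycle ∧ T.support = Finset.univ

/-- The cost of a tour: the sum of the costs of its edges. -/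
noncomputable def tourCost (c : V → V → ℝ) (T : Equiv.Perm V) : ℝ :=
  ∑ v, c v (T v)

/-- The edge set of a tour. -/
def tourEdges (T : Equiv.Perm V) : Finset (Sym2 V) :=
  Finset.image (fun v => s(v, T v)) Finset.univ

/-- A metric TSP cost function: symmetric, zero on the diagonal, nonnegative,
satisfying the triangle inequality. -/
def IsMetric (c : V → V → ℝ) : Prop :=
  (∀ u v, c u v = c v u) ∧ (∀ v, c v v = 0) ∧ (∀ u v, 0 ≤ c u v) ∧
    ∀ x y z, c x y ≤ c x z + c z y

/-- A tour `T` is `k`-optimal if every tour `T'` whose edge set contains at most `k`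
edges not in `T` is at least as expensive as `T`. -/
def IsKOptimal (k : ℕ) (c : V → V → ℝ) (T : Equiv.Perm V) : Prop :=
  IsTour T ∧ ∀ T' : Equiv.Perm V, IsTour T' →
    (tourEdges T' \ tourEdges T).card ≤ k → tourCost c T ≤ tourCost c T'

/-- An optimal tour: a tour of minimum cost. -/
def IsOptimalTour (c : V → V → ℝ) (T : Equiv.Perm V) : Prop :=
  IsTour T ∧ ∀ T' : Equiv.Perm V, IsTour T' → tourCost c T ≤ tourCost c T'

end TSP



open Equiv Equiv.Perm

variable {V : Type} [Fintype V] [DecidableEq V]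

/-- Walking from `b` under `swap a b * σ` reaches `a`, provided `a` is not on `b`'s σ-cycle. -/
lemma sameCycle_swap_mul_of_not_sameCycle (σ : Equiv.Perm V) (a b : V)
    (h : ¬ σ.SameCycle a b) : (Equiv.swap a b * σ).SameCycle b a := by
  set σ' := Equiv.swap a b * σ with hσ'
  set m := Function.minimalPeriod σ b with hm
  have hper : b ∈ Function.periodicPts σ :=
    ⟨orderOf σ, orderOf_pos σ, by
      show (⇑σ)^[orderOf σ] b = b
      rw [← Equiv.Perm.coe_pow, pow_orderOf_eq_one]; rfl⟩
  have hmpos : 0 < m := Function.minimalPeriod_pos_of_mem_periodicPts hper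
  have key : ∀ i, i < m → (σ' ^ i) b = (σ ^ i) b := by
    intro i hi
    induction i with
    | zero => simp
    | succ n ih =>
      have hn : n < m := by omega
      have h1 : (σ' ^ (n+1)) b = σ' ((σ ^ n) b) := by
        rw [pow_succ', Equiv.Perm.mul_apply, ih hn]
      have h2 : σ' ((σ ^ n) b) = Equiv.swap a b ((σ ^ (n+1)) b) := by
        rw [hσ', Equiv.Perm.mul_apply, pow_succ', Equiv.Perm.mul_apply]
      have hna : (σ ^ (n+1)) b ≠ a := by
        intro hc
        exact h (Equiv.Perm.SameCycle.symm ⟨((n:ℤ)+1), by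
          rw [show ((n:ℤ)+1) = ((n+1 : ℕ) : ℤ) by push_cast; rfl, zpow_natCast]; exact hc⟩)
      have hnb : (σ ^ (n+1)) b ≠ b := by
        intro hc
        have := Function.not_isPeriodicPt_of_pos_of_lt_minimalPeriod
          (x := b) (f := σ) (n := n+1) (by omega) (by omega)
        exact this (by show (⇑σ)^[n+1] b = b; rw [← Equiv.Perm.coe_pow]; exact hc)
      rw [h1, h2, Equiv.swap_apply_of_ne_of_ne hna hnb]
  have hm' : (σ' ^ m) b = a := by
    obtain ⟨n, hn1⟩ : ∃ n, m = n + 1 := ⟨m - 1, by omega⟩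
    have h1 : (σ' ^ (n+1)) b = σ' ((σ ^ n) b) := by
      rw [pow_succ', Equiv.Perm.mul_apply, key n (by omega)]
    have h2 : (σ ^ (n+1)) b = b := by
      have := Function.isPeriodicPt_minimalPeriod σ b
      rw [← hm, hn1] at this
      rw [Equiv.Perm.coe_pow]; exact this
    rw [hn1, h1, hσ', Equiv.Perm.mul_apply, ← Equiv.Perm.mul_apply σ, ← pow_succ', h2,
      Equiv.swap_apply_right]
  exact ⟨(m : ℤ), by simpa [zpow_natCast] using hm'⟩

/-- Multiplying by a swap of two points on different cycles preserves SameCycle. -/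
lemma sameCycle_mono_swap_mul (σ : Equiv.Perm V) (a b : V)
    (h : ¬ σ.SameCycle a b) {x y : V} (hxy : σ.SameCycle x y) :
    (Equiv.swap a b * σ).SameCycle x y := by
  set σ' := Equiv.swap a b * σ with hσ'
  have hba : σ'.SameCycle b a := sameCycle_swap_mul_of_not_sameCycle σ a b h
  have hab : σ'.SameCycle a b := by
    have : ¬ σ.SameCycle b a := fun hc => h hc.symm
    have := sameCycle_swap_mul_of_not_sameCycle σ b a this
    rwa [Equiv.swap_comm] at this
  have step : ∀ v, σ'.SameCycle v (σ v) := by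
    intro v
    by_cases hva : σ v = a
    · have h1 : σ' v = b := by rw [hσ', Equiv.Perm.mul_apply, hva, Equiv.swap_apply_left]
      have : σ'.SameCycle v b := ⟨1, by simp [h1]⟩
      rw [hva]
      exact this.trans hba
    · by_cases hvb : σ v = b
      · have h1 : σ' v = a := by rw [hσ', Equiv.Perm.mul_apply, hvb, Equiv.swap_apply_right]
        have : σ'.SameCycle v a := ⟨1, by simp [h1]⟩
        rw [hvb]
        exact this.trans hab
      · exact ⟨1, by simp [hσ', Equiv.Perm.mul_apply, Equiv.swap_apply_of_ne_of_ne hva hvb]⟩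
  obtain ⟨i, hilt, hi⟩ := hxy.exists_pow_eq'
  clear hilt
  subst hi
  clear hxy
  induction i with
  | zero => simp [Equiv.Perm.SameCycle.refl]
  | succ n ih =>
    have : (σ ^ (n+1)) x = σ ((σ ^ n) x) := by rw [pow_succ', Equiv.Perm.mul_apply]
    rw [this]
    exact ih.trans (step _)

/-- Converse-type control: SameCycle in `swap a b * σ` implies same cycle or both in merged. -/
lemma sameCycle_swap_mul_cases (σ : Equiv.Perm V) (a b : V) {x y : V}
    (hxy : (Equiv.swap a b * σ).SameCycle x y) :
    σ.SameCycle x y ∨ ((σ.SameCycle x a ∨ σ.SameCycle x b) ∧ (σ.SameCycle y a ∨ σ.SameCycle y b)) := by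
  set σ' := Equiv.swap a b * σ with hσ'
  set R : V → V → Prop := fun u w => σ.SameCycle u w ∨
    ((σ.SameCycle u a ∨ σ.SameCycle u b) ∧ (σ.SameCycle w a ∨ σ.SameCycle w b)) with hR
  have hRtrans : ∀ u w z, R u w → R w z → R u z := by
    rintro u w z (h1 | ⟨h1, h2⟩) (h3 | ⟨h3, h4⟩)
    · exact Or.inl (h1.trans h3)
    · exact Or.inr ⟨h3.imp (h1.trans) (h1.trans), h4⟩
    · exact Or.inr ⟨h1, h2.imp (fun q => h3.symm.trans q) (fun q => h3.symm.trans q)⟩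
    · exact Or.inr ⟨h1, h4⟩
  have step : ∀ u, R u (σ' u) := by
    intro u
    by_cases hua : σ u = a
    · refine Or.inr ⟨Or.inl ⟨1, by simpa using hua⟩, ?_⟩
      have hb : σ' u = b := by rw [hσ', Equiv.Perm.mul_apply, hua, Equiv.swap_apply_left]
      rw [hb]
      exact Or.inr (Equiv.Perm.SameCycle.refl _ _)
    · by_cases hub : σ u = b
      · refine Or.inr ⟨Or.inr ⟨1, by simpa using hub⟩, ?_⟩
        have ha : σ' u = a := by rw [hσ', Equiv.Perm.mul_apply, hub, Equiv.swap_apply_right]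
        rw [ha]
        exact Or.inl (Equiv.Perm.SameCycle.refl _ _)
      · refine Or.inl ⟨1, ?_⟩
        simp [hσ', Equiv.Perm.mul_apply, Equiv.swap_apply_of_ne_of_ne hua hub]
  obtain ⟨i, hilt, hi⟩ := hxy.exists_pow_eq'
  clear hilt
  subst hi
  clear hxy
  induction i with
  | zero => exact Or.inl (by simpa using Equiv.Perm.SameCycle.refl σ x)
  | succ n ih =>
    have hh : (σ' ^ (n+1)) x = σ' ((σ' ^ n) x) := by rw [pow_succ', Equiv.Perm.mul_apply]
    rw [hh]
    exact hRtrans _ _ _ ih (step _)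

/-- Merging all cycles of a fixed-point-free permutation into a single cycle,
changing the successor of at most `l.length` vertices. -/
lemma merge_cycles : ∀ (l : List V) (σ : Equiv.Perm V), l ≠ [] →
    l.Nodup → (∀ v, σ v ≠ v) →
    List.Pairwise (fun x y => ¬ σ.SameCycle x y) l →
    (∀ v, ∃ x ∈ l, σ.SameCycle x v) →
    ∃ T : Equiv.Perm V, T.IsCycle ∧ (∀ v, T v ≠ v) ∧ (∀ v, T v ≠ σ v → σ v ∈ l) := by
  intro l
  induction l with
  | nil => intro σ hne; exact absurd rfl hne
  | cons a l' ih =>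
    intro σ _ hnodup hfix hpair hcover
    rcases l' with _ | ⟨b, rest⟩
    · refine ⟨σ, ⟨a, hfix a, fun y _ => ?_⟩, hfix, fun v hv => absurd rfl hv⟩
      obtain ⟨x, hx, hxy⟩ := hcover y
      simp only [List.mem_singleton] at hx
      subst hx
      exact hxy
    · 
      have hab : ¬ σ.SameCycle a b := (List.pairwise_cons.mp hpair).1 b (by simp)
      have haneb : a ≠ b := by
        intro hc; subst hc; exact hab (Equiv.Perm.SameCycle.refl _ _)
      set σ' := Equiv.swap a b * σ with hσ'
      have hfix' : ∀ v, σ' v ≠ v := by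
        intro v hc
        by_cases hva : σ v = a
        · have hb : σ' v = b := by rw [hσ', Equiv.Perm.mul_apply, hva, Equiv.swap_apply_left]
          rw [hb] at hc
          subst hc
          exact hab (Equiv.Perm.SameCycle.symm ⟨1, by simpa using hva⟩)
        · by_cases hvb : σ v = b
          · have ha : σ' v = a := by rw [hσ', Equiv.Perm.mul_apply, hvb, Equiv.swap_apply_right]
            rw [ha] at hc
            subst hc
            exact hab ⟨1, by simpa using hvb⟩
          · have heq : σ' v = σ v := by
              simp [hσ', Equiv.Perm.mul_apply, Equiv.swap_apply_of_ne_of_ne hva hvb]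
            rw [heq] at hc
            exact hfix v hc
      have hsym : ∀ x ∈ a :: b :: rest, ∀ y ∈ a :: b :: rest, x ≠ y → ¬ σ.SameCycle x y := by
        intro x hx y hy hne
        have hsymR : Symmetric (fun x y => ¬ σ.SameCycle x y) :=
          fun p q hpq hsc => hpq hsc.symm
        haveI : Std.Symm (fun x y => ¬ σ.SameCycle x y) := ⟨fun p q hpq => hsymR hpq⟩
        exact List.Pairwise.forall hpair hx hy hne
      have hanotin : a ∉ b :: rest := (List.nodup_cons.mp hnodup).1
      have hnd' : (b :: rest).Nodup := (List.nodup_cons.mp hnodup).2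
      have hpair' : List.Pairwise (fun x y => ¬ σ'.SameCycle x y) (b :: rest) := by
        refine List.Pairwise.imp_of_mem ?_ hnd'
        intro u w hu hw hne hsc
        rcases sameCycle_swap_mul_cases σ a b hsc with h1 | ⟨h1, h2⟩
        · exact hsym u (List.mem_cons_of_mem a hu) w (List.mem_cons_of_mem a hw) hne h1
        · by_cases hub : u = b
          · rcases h2 with h2 | h2
            · exact hsym w (List.mem_cons_of_mem a hw) a (by simp)
                (fun hc => hanotin (hc ▸ hw)) h2
            · exact hsym w (List.mem_cons_of_mem a hw) b (by simp)
                (fun hc => hne (hub.trans hc.symm)) h2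
          · rcases h1 with h1 | h1
            · exact hsym u (List.mem_cons_of_mem a hu) a (by simp)
                (fun hc => hanotin (hc ▸ hu)) h1
            · exact hsym u (List.mem_cons_of_mem a hu) b (by simp) hub h1
      have hab' : σ'.SameCycle a b := by
        have hba : ¬ σ.SameCycle b a := fun hc => hab hc.symm
        have := sameCycle_swap_mul_of_not_sameCycle σ b a hba
        rwa [Equiv.swap_comm] at this
      have hcover' : ∀ v, ∃ x ∈ b :: rest, σ'.SameCycle x v := by
        intro v
        obtain ⟨x, hx, hxv⟩ := hcover v
        rcases List.mem_cons.mp hx with hx' | hx'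
        · refine ⟨b, by simp, hab'.symm.trans ?_⟩
          rw [← hx']
          exact sameCycle_mono_swap_mul σ a b hab hxv
        · exact ⟨x, hx', sameCycle_mono_swap_mul σ a b hab hxv⟩
      obtain ⟨T, hT1, hT2, hT3⟩ := ih σ' (by simp) hnd' hfix' hpair' hcover'
      refine ⟨T, hT1, hT2, ?_⟩
      intro v hv
      by_cases hva : σ v = a
      · rw [hva]; simp
      · by_cases hvb : σ v = b
        · rw [hvb]; simp
        · have heq : σ' v = σ v := by
            simp [hσ', Equiv.Perm.mul_apply, Equiv.swap_apply_of_ne_of_ne hva hvb]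
          have := hT3 v (by rw [heq]; exact hv)
          rw [heq] at this
          exact List.mem_cons_of_mem a this




lemma girth_le_minimalPeriod (G : SimpleGraph V) (g : ℕ)
    (hgirth : ∀ (a : V) (w : G.Walk a a), w.IsCycle → g ≤ w.length)
    (σ : Equiv.Perm V) (hσ : ∀ v, G.Adj v (σ v) ∧ σ (σ v) ≠ v) (v : V) :
    g ≤ Function.minimalPeriod σ v := by
  classical
  set m := Function.minimalPeriod (⇑σ) v with hm
  have hper : v ∈ Function.periodicPts σ :=
    ⟨orderOf σ, orderOf_pos σ, by
      show (⇑σ)^[orderOf σ] v = v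
      rw [← Equiv.Perm.coe_pow, pow_orderOf_eq_one]; rfl⟩
  have hmpos : 0 < m := Function.minimalPeriod_pos_of_mem_periodicPts hper
  have hmper : (σ ^ m) v = v := by
    have := Function.isPeriodicPt_minimalPeriod (⇑σ) v
    rw [Equiv.Perm.coe_pow]; exact this
  have hinj : ∀ i < m, ∀ j < m, (σ ^ i) v = (σ ^ j) v → i = j := by
    intro i hi j hj hij
    have := Function.iterate_injOn_Iio_minimalPeriod (f := ⇑σ) (x := v)
    exact this (by simpa [← hm] using hi) (by simpa [← hm] using hj)
      (by simpa [Equiv.Perm.iterate_eq_pow] using hij)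
  -- build the walk
  have W : ∀ k : ℕ, { w : G.Walk v ((σ ^ k) v) //
      w.length = k ∧ w.support = (List.range (k+1)).map (fun i => (σ ^ i) v) ∧
      w.edges = (List.range k).map (fun i => s((σ ^ i) v, (σ ^ (i+1)) v)) } := by
    intro k
    induction k with
    | zero =>
      refine ⟨(SimpleGraph.Walk.nil' v).copy rfl (by simp), by simp, ?_, by simp⟩
      simp [List.range_succ]
    | succ n ihn =>
      obtain ⟨w, hl, hs, he⟩ := ihn
      have hadj : G.Adj ((σ ^ n) v) ((σ ^ (n+1)) v) := by
        have := (hσ ((σ ^ n) v)).1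
        rwa [show σ ((σ ^ n) v) = (σ ^ (n+1)) v by
          rw [pow_succ', Equiv.Perm.mul_apply]] at this
      refine ⟨w.concat hadj, by simp [hl], ?_, ?_⟩
      · rw [SimpleGraph.Walk.support_concat, hs,
          List.range_succ (n := n+1), List.map_append]
        simp
      · rw [SimpleGraph.Walk.edges_concat, he, List.concat_eq_append,
          List.range_succ (n := n), List.map_append]
        simp
  obtain ⟨w, hl, hs, he⟩ := W m
  set p : G.Walk v v := w.copy rfl (by rw [hmper]) with hp
  have hpl : p.length = m := by simp [hp, hl]
  have hpe : p.edges = (List.range m).map (fun i => s((σ ^ i) v, (σ ^ (i+1)) v)) := by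
    simp [hp, he]
  have hps : p.support = (List.range (m+1)).map (fun i => (σ ^ i) v) := by
    simp [hp, hs]
  have hcyc : p.IsCycle := by
    constructor
    · constructor
      · constructor
        rw [hpe]
        apply List.Nodup.map_on ?_ List.nodup_range
        intro i hi j hj hij
        rw [List.mem_range] at hi hj
        rcases Sym2.eq_iff.mp hij with ⟨h1, h2⟩ | ⟨h1, h2⟩
        · exact hinj i hi j hj h1
        · -- σ² fixes (σ ^ j) v : contradiction
          exfalso
          have hji : (σ ^ (j+1+1)) v = σ ((σ ^ (j+1)) v) := by
            rw [pow_succ' (n := j+1), Equiv.Perm.mul_apply]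
          have : σ (σ ((σ ^ j) v)) = (σ ^ j) v := by
            have e1 : σ ((σ ^ j) v) = (σ ^ (j+1)) v := by
              rw [pow_succ', Equiv.Perm.mul_apply]
            rw [e1, ← h1]
            have e2 : σ ((σ ^ i) v) = (σ ^ (i+1)) v := by
              rw [pow_succ', Equiv.Perm.mul_apply]
            rw [e2, h2]
          exact (hσ ((σ ^ j) v)).2 this
      · intro hnil
        have : p.length = 0 := by rw [hnil]; rfl
        omega
    · rw [hps, List.range_succ_eq_map, List.map_cons, List.tail_cons, List.map_map]
      apply List.Nodup.map_on ?_ List.nodup_range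
      intro i hi j hj hij
      rw [List.mem_range] at hi hj
      simp only [Function.comp_apply] at hij
      have h1 : ((σ ^ (i+1)) v) = ((σ ^ (j+1)) v) := by
        simpa [pow_succ'] using hij
      have h2 : ((σ ^ i) v) = ((σ ^ j) v) := by
        have e1 : (σ ^ (i+1)) v = σ ((σ ^ i) v) := by rw [pow_succ', Equiv.Perm.mul_apply]
        have e2 : (σ ^ (j+1)) v = σ ((σ ^ j) v) := by rw [pow_succ', Equiv.Perm.mul_apply]
        rw [e1, e2] at h1
        exact σ.injective h1
      exact hinj i hi j hj h2
  have := hgirth v p hcyc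
  omega



set_option maxHeartbeats 1000000 in
lemma exists_orientation (G : SimpleGraph V) [DecidableRel G.Adj]
    (hdeg : ∀ v, (G.neighborFinset v).card = 2) :
    ∃ σ : Equiv.Perm V, ∀ v, G.Adj v (σ v) ∧ σ (σ v) ≠ v := by
  classical
  letI : LinearOrder V := LinearOrder.lift' (⇑(Fintype.equivFin V)) (Equiv.injective _)
  -- `oth v a` : the neighbor of `v` other than `a`
  have hne : ∀ (v a : V), ((G.neighborFinset v).erase a).Nonempty := by
    intro v a
    apply Finset.card_pos.mp
    have h1 := Finset.pred_card_le_card_erase (s := G.neighborFinset v) (a := a)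
    have h2 := hdeg v
    omega
  set oth : V → V → V := fun v a => ((G.neighborFinset v).erase a).min' (hne v a) with hothdef
  have hoth_mem : ∀ v a, oth v a ∈ (G.neighborFinset v).erase a :=
    fun v a => Finset.min'_mem _ _
  have hoth_nbr : ∀ v a, G.Adj v (oth v a) := by
    intro v a
    have h := hoth_mem v a
    rw [Finset.mem_erase, SimpleGraph.mem_neighborFinset] at h
    exact h.2
  have hoth_ne : ∀ v a, oth v a ≠ a := fun v a => (Finset.mem_erase.mp (hoth_mem v a)).1
  have huniq : ∀ v a b, a ∈ G.neighborFinset v → b ∈ G.neighborFinset v → b ≠ a →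
      b = oth v a := by
    intro v a b ha hb hba
    have hcard : ((G.neighborFinset v).erase a).card = 1 := by
      rw [Finset.card_erase_of_mem ha, hdeg v]
    obtain ⟨c, hc⟩ := Finset.card_eq_one.mp hcard
    have h1 : b ∈ (G.neighborFinset v).erase a := Finset.mem_erase.mpr ⟨hba, hb⟩
    have h2 := hoth_mem v a
    rw [hc, Finset.mem_singleton] at h1 h2
    rw [h1, h2]
  have hoth_oth : ∀ v a, a ∈ G.neighborFinset v → oth v (oth v a) = a := by
    intro v a ha
    exact (huniq v (oth v a) a (Finset.mem_erase.mp (hoth_mem v a)).2 ha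
      (Ne.symm (hoth_ne v a))).symm
  -- the type of oriented edges
  set D := {p : V × V // G.Adj p.1 p.2} with hD
  set Ffun : D → D := fun p => ⟨(p.1.2, oth p.1.2 p.1.1), hoth_nbr _ _⟩ with hFfun
  have hFinj : Function.Injective Ffun := by
    rintro ⟨⟨a, b⟩, hab⟩ ⟨⟨a', b'⟩, hab'⟩ h
    have h1 : b = b' := congrArg (fun q : D => (q : V × V).1) h
    have h2 : oth b a = oth b' a' := congrArg (fun q : D => (q : V × V).2) h
    subst h1
    have ha : a ∈ G.neighborFinset b := (SimpleGraph.mem_neighborFinset _ _ _).mpr hab.symm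
    have ha' : a' ∈ G.neighborFinset b := (SimpleGraph.mem_neighborFinset _ _ _).mpr hab'.symm
    have e1 : oth b (oth b a) = a := hoth_oth b a ha
    have e2 : oth b (oth b a') = a' := hoth_oth b a' ha'
    apply Subtype.ext
    show (a, b) = (a', b)
    have : a = a' := by rw [← e1, h2, e2]
    rw [this]
  have hFbij : Function.Bijective Ffun := Finite.injective_iff_bijective.mp hFinj
  set Fe : Equiv.Perm D := Equiv.ofBijective Ffun hFbij with hFe
  have hFe_apply : ∀ p, Fe p = Ffun p := fun p => rfl
  set φe : Equiv.Perm D :=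
    ⟨fun p => ⟨(p.1.2, p.1.1), p.2.symm⟩, fun p => ⟨(p.1.2, p.1.1), p.2.symm⟩,
      fun p => Subtype.ext rfl, fun p => Subtype.ext rfl⟩ with hφe
  have hφφ : ∀ p, φe (φe p) = p := fun p => Subtype.ext rfl
  have hφinv : φe⁻¹ = φe := Equiv.ext fun p => rfl
  have hφne : ∀ p, φe p ≠ p := by
    rintro ⟨⟨a, b⟩, hab⟩ h
    have h1 : b = a := congrArg (fun q : D => (q : V × V).1) h
    exact hab.ne' h1
  have hφneF : ∀ p, φe p ≠ Fe p := by
    rintro ⟨⟨a, b⟩, hab⟩ h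
    have h1 : a = oth b a := congrArg (fun q : D => (q : V × V).2) h
    exact hoth_ne b a h1.symm
  have hkey : ∀ p, Fe (φe (Fe p)) = φe p := by
    rintro ⟨⟨a, b⟩, hab⟩
    have ha : a ∈ G.neighborFinset b := (SimpleGraph.mem_neighborFinset _ _ _).mpr hab.symm
    apply Subtype.ext
    show (b, oth b (oth b a)) = (b, a)
    rw [hoth_oth b a ha]
  have hconj : φe * Fe * φe = Fe⁻¹ := by
    apply Equiv.ext
    intro p
    apply Fe.injective
    have h1 : Fe ((φe * Fe * φe) p) = φe (φe p) := by
      simp only [Equiv.Perm.mul_apply]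
      exact hkey (φe p)
    rw [h1, hφφ, show Fe (Fe⁻¹ p) = p from Fe.apply_symm_apply p]
  have hconj_zpow : ∀ i : ℤ, φe * Fe ^ i * φe = Fe ^ (-i) := by
    intro i
    have h1 : MulAut.conj φe Fe = Fe⁻¹ := by
      simp only [MulAut.conj_apply, hφinv]
      exact hconj
    calc φe * Fe ^ i * φe = MulAut.conj φe (Fe ^ i) := by
          simp only [MulAut.conj_apply, hφinv]
      _ = (MulAut.conj φe Fe) ^ i := map_zpow _ _ _
      _ = (Fe⁻¹) ^ i := by rw [h1]
      _ = Fe ^ (-i) := by group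
  have hnokey : ∀ p, ¬ Fe.SameCycle p (φe p) := by
    rintro p ⟨i, hi⟩
    have hmain : ∀ j : ℤ, φe ((Fe ^ j) p) = (Fe ^ (i - j)) p := by
      intro j
      have h2 : φe ((Fe ^ j) p) = (Fe ^ (-j)) (φe p) := by
        calc φe ((Fe ^ j) p) = (φe * Fe ^ j * φe) (φe p) := by
              simp only [Equiv.Perm.mul_apply, hφφ]
          _ = (Fe ^ (-j)) (φe p) := by rw [hconj_zpow j]
      rw [h2, ← hi, ← Equiv.Perm.mul_apply, ← zpow_add]
      rw [show -j + i = i - j from by ring]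
    rcases Int.even_or_odd i with ⟨j, hj⟩ | ⟨j, hj⟩
    · have h3 : φe ((Fe ^ j) p) = (Fe ^ j) p := by
        rw [hmain j, show i - j = j from by omega]
      exact hφne _ h3
    · have h3 : φe ((Fe ^ j) p) = Fe ((Fe ^ j) p) := by
        rw [hmain j, show i - j = 1 + j from by omega, zpow_add, zpow_one,
          Equiv.Perm.mul_apply]
      exact hφneF _ h3
  -- choose one direction of each cycle-pair via minima of combined orbits
  letI : LinearOrder D := LinearOrder.lift' (⇑(Fintype.equivFin D)) (Equiv.injective _)
  set comb : D → Finset D :=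
    fun p => Finset.univ.filter (fun q => Fe.SameCycle p q ∨ Fe.SameCycle (φe p) q)
    with hcombdef
  have hcomb_ne : ∀ p, (comb p).Nonempty := by
    intro p
    exact ⟨p, by simp [hcombdef, Equiv.Perm.SameCycle.refl]⟩
  set mfun : D → D := fun p => (comb p).min' (hcomb_ne p) with hmfundef
  have hφF : ∀ p, φe (Fe p) = Fe⁻¹ (φe p) := by
    intro p
    apply Fe.injective
    rw [hkey p, show Fe (Fe⁻¹ (φe p)) = φe p from Fe.apply_symm_apply (φe p)]
  have hcomb_F : ∀ p, comb (Fe p) = comb p := by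
    intro p
    ext q
    simp only [hcombdef, Finset.mem_filter, Finset.mem_univ, true_and]
    have h1 : Fe.SameCycle p (Fe p) := ⟨1, by simp⟩
    have h2 : Fe.SameCycle (φe p) (φe (Fe p)) := by
      rw [hφF p]; exact ⟨-1, by simp⟩
    constructor
    · rintro (h | h)
      · exact Or.inl (h1.trans h)
      · exact Or.inr (h2.trans h)
    · rintro (h | h)
      · exact Or.inl (h1.symm.trans h)
      · exact Or.inr (h2.symm.trans h)
  have hcomb_φ : ∀ p, comb (φe p) = comb p := by
    intro p
    ext q
    simp only [hcombdef, Finset.mem_filter, Finset.mem_univ, true_and, hφφ]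
    exact or_comm
  have hm_F : ∀ p, mfun (Fe p) = mfun p := by
    intro p
    simp only [hmfundef]
    congr 1
    exact hcomb_F p
  have hm_φ : ∀ p, mfun (φe p) = mfun p := by
    intro p
    simp only [hmfundef]
    congr 1
    exact hcomb_φ p
  set Sp : D → Prop := fun p => Fe.SameCycle (mfun p) p with hSpdef
  have hm_mem : ∀ p, Fe.SameCycle p (mfun p) ∨ Fe.SameCycle (φe p) (mfun p) := by
    intro p
    have := Finset.min'_mem (comb p) (hcomb_ne p)
    simpa [hcombdef, hmfundef] using this
  have hxor : ∀ p, Sp p ↔ ¬ Sp (φe p) := by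
    intro p
    have hmφ : mfun (φe p) = mfun p := hm_φ p
    rcases hm_mem p with h | h
    · constructor
      · intro _ hc
        rw [hSpdef] at hc
        simp only [hmφ] at hc
        exact hnokey p (h.trans hc)
      · intro _
        exact h.symm
    · constructor
      · intro hc _
        exact (hnokey p (h.trans hc).symm).elim
      · intro hc
        exfalso
        apply hc
        rw [hSpdef]
        simp only [hmφ]
        exact h.symm
  have hSp_F : ∀ p, Sp (Fe p) ↔ Sp p := by
    intro p
    simp only [hSpdef, hm_F]
    have h1 : Fe.SameCycle p (Fe p) := ⟨1, by simp⟩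
    exact ⟨fun h => h.trans h1.symm, fun h => h.trans h1⟩
  -- canonical two neighbors
  have hnf_ne : ∀ v : V, (G.neighborFinset v).Nonempty := by
    intro v
    apply Finset.card_pos.mp
    rw [hdeg v]
    omega
  set n1 : V → V := fun v => (G.neighborFinset v).min' (hnf_ne v) with hn1def
  have hn1_mem : ∀ v, n1 v ∈ G.neighborFinset v := fun v => Finset.min'_mem _ _
  have hn1_adj : ∀ v, G.Adj v (n1 v) :=
    fun v => (SimpleGraph.mem_neighborFinset _ _ _).mp (hn1_mem v)
  set n2 : V → V := fun v => oth v (n1 v) with hn2def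
  have hn2_adj : ∀ v, G.Adj v (n2 v) := fun v => hoth_nbr v (n1 v)
  have hn21 : ∀ v, n2 v ≠ n1 v := fun v => hoth_ne v (n1 v)
  have hφ_mk : ∀ (a b : V) (h : G.Adj a b), φe ⟨(a, b), h⟩ = ⟨(b, a), h.symm⟩ :=
    fun _ _ _ => rfl
  have hstep : ∀ (a v b : V) (hav : G.Adj a v) (hvb : G.Adj v b), b ≠ a →
      Fe ⟨(a, v), hav⟩ = ⟨(v, b), hvb⟩ := by
    intro a v b hav hvb hba
    apply Subtype.ext
    show (v, oth v a) = (v, b)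
    have : b = oth v a := huniq v a b ((SimpleGraph.mem_neighborFinset _ _ _).mpr hav.symm)
      ((SimpleGraph.mem_neighborFinset _ _ _).mpr hvb) hba
    rw [this]
  have hswap : ∀ v, (Sp ⟨(v, n2 v), hn2_adj v⟩ ↔ ¬ Sp ⟨(v, n1 v), hn1_adj v⟩) := by
    intro v
    have e1 : Fe ⟨(n2 v, v), (hn2_adj v).symm⟩ = ⟨(v, n1 v), hn1_adj v⟩ :=
      hstep (n2 v) v (n1 v) (hn2_adj v).symm (hn1_adj v) (hn21 v).symm
    have e2 : Sp ⟨(v, n1 v), hn1_adj v⟩ ↔ Sp ⟨(n2 v, v), (hn2_adj v).symm⟩ := by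
      rw [← e1]
      exact hSp_F _
    rw [e2, hxor ⟨(v, n2 v), hn2_adj v⟩, hφ_mk]
  set σf : V → V := fun v => if Sp ⟨(v, n1 v), hn1_adj v⟩ then n1 v else n2 v with hσfdef
  have hσf_cases : ∀ v, σf v = n1 v ∨ σf v = n2 v := by
    intro v
    simp only [hσfdef]
    split_ifs
    · exact Or.inl rfl
    · exact Or.inr rfl
  have hσf_adj : ∀ v, G.Adj v (σf v) := by
    intro v
    rcases hσf_cases v with h | h <;> rw [h]
    · exact hn1_adj v
    · exact hn2_adj v
  have hσf_Sp : ∀ v, Sp ⟨(v, σf v), hσf_adj v⟩ := by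
    intro v
    by_cases h : Sp ⟨(v, n1 v), hn1_adj v⟩
    · have e : σf v = n1 v := by simp only [hσfdef]; rw [if_pos h]
      have e2 : (⟨(v, σf v), hσf_adj v⟩ : D) = ⟨(v, n1 v), hn1_adj v⟩ :=
        Subtype.ext (show (v, σf v) = (v, n1 v) by rw [e])
      rw [e2]
      exact h
    · have e : σf v = n2 v := by simp only [hσfdef]; rw [if_neg h]
      have e2 : (⟨(v, σf v), hσf_adj v⟩ : D) = ⟨(v, n2 v), hn2_adj v⟩ :=
        Subtype.ext (show (v, σf v) = (v, n2 v) by rw [e])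
      rw [e2]
      exact (hswap v).mpr h
  have hσf_inj : Function.Injective σf := by
    intro u v h
    by_contra hne
    have hadj_u : G.Adj u (σf v) := by rw [← h]; exact hσf_adj u
    have hSp_u : Sp ⟨(u, σf v), hadj_u⟩ := by
      have e2 : (⟨(u, σf u), hσf_adj u⟩ : D) = ⟨(u, σf v), hadj_u⟩ :=
        Subtype.ext (show (u, σf u) = (u, σf v) by rw [h])
      rw [← e2]
      exact hσf_Sp u
    have hSp_v : Sp ⟨(v, σf v), hσf_adj v⟩ := hσf_Sp v
    have e1 : Fe ⟨(u, σf v), hadj_u⟩ = ⟨(σf v, v), (hσf_adj v).symm⟩ :=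
      hstep u (σf v) v hadj_u (hσf_adj v).symm (fun hc => hne hc.symm)
    have hSp_wv : Sp ⟨(σf v, v), (hσf_adj v).symm⟩ := by
      rw [← e1]
      exact (hSp_F _).mpr hSp_u
    have := (hxor ⟨(v, σf v), hσf_adj v⟩).mp hSp_v
    rw [hφ_mk] at this
    exact this hSp_wv
  set σ : Equiv.Perm V := Equiv.ofBijective σf (Finite.injective_iff_bijective.mp hσf_inj)
    with hσdef
  have hσ_apply : ∀ v, σ v = σf v := fun v => rfl
  refine ⟨σ, fun v => ⟨by rw [hσ_apply]; exact hσf_adj v, ?_⟩⟩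
  intro hc
  rw [hσ_apply, hσ_apply] at hc
  have hSp_v : Sp ⟨(v, σf v), hσf_adj v⟩ := hσf_Sp v
  have hadj_w : G.Adj (σf v) v := (hσf_adj v).symm
  have hSp_w : Sp ⟨(σf v, v), hadj_w⟩ := by
    have e2 : (⟨(σf v, σf (σf v)), hσf_adj (σf v)⟩ : D) = ⟨(σf v, v), hadj_w⟩ :=
      Subtype.ext (show (σf v, σf (σf v)) = (σf v, v) by rw [hc])
    rw [← e2]
    exact hσf_Sp (σf v)
  have := (hxor ⟨(v, σf v), hσf_adj v⟩).mp hSp_v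
  rw [hφ_mk] at this
  exact this hSp_w


set_option maxHeartbeats 1000000 in
theorem stmt_18 (g N : ℕ) (hg : 3 ≤ g) (hN : 3 ≤ N)
    (G : SimpleGraph (Fin N))
    (hdeg : ∀ v, Nat.card (G.neighborSet v) = 2)
    (hgirth : (g : ℕ∞) ≤ G.girth)
    (cost : Fin N → Fin N → ℝ)
    (h0 : ∀ v, cost v v = 0)
    (h1 : ∀ u v, G.Adj u v → cost u v = 1)
    (h2 : ∀ u v, u ≠ v → ¬ G.Adj u v → cost u v = 2) :
    ∃ T : Equiv.Perm (Fin N), IsTour T ∧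
      tourCost cost T ≤ (N : ℝ) + (N : ℝ) / (g : ℝ) := by
  classical
  haveI : Nonempty (Fin N) := ⟨⟨0, by omega⟩⟩
  have hdeg' : ∀ v, (G.neighborFinset v).card = 2 := by
    intro v
    rw [SimpleGraph.neighborFinset, Set.toFinset_card, ← Nat.card_eq_fintype_card]
    exact hdeg v
  obtain ⟨σ, hσ⟩ := exists_orientation G hdeg'
  have hgirth' : ∀ (a : Fin N) (w : G.Walk a a), w.IsCycle → g ≤ w.length := by
    intro a w hw
    have hle : G.egirth ≤ (w.length : ℕ∞) := SimpleGraph.le_egirth.mp le_rfl a w hw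
    have h2' : (g : ℕ∞) ≤ G.egirth := le_trans hgirth (ENat.coe_toNat_le_self G.egirth)
    have := le_trans h2' hle
    exact_mod_cast this
  have hperiod : ∀ v, g ≤ Function.minimalPeriod σ v :=
    girth_le_minimalPeriod G g hgirth' σ hσ
  have hfix : ∀ v, σ v ≠ v := by
    intro v hc
    have := (hσ v).1
    rw [hc] at this
    exact G.loopless.irrefl v this
  -- orbit representatives
  set r : Fin N → Fin N := fun v =>
    (Finset.univ.filter (fun w => σ.SameCycle v w)).min'
      ⟨v, by simp [Equiv.Perm.SameCycle.refl]⟩ with hrdef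
  have hr_sc : ∀ v, σ.SameCycle v (r v) := by
    intro v
    have := Finset.min'_mem (Finset.univ.filter (fun w => σ.SameCycle v w))
      ⟨v, by simp [Equiv.Perm.SameCycle.refl]⟩
    simpa [hrdef] using this
  have hr_eq : ∀ u v, σ.SameCycle u v → r u = r v := by
    intro u v huv
    simp only [hrdef]
    congr 1
    ext w
    simp only [Finset.mem_filter, Finset.mem_univ, true_and]
    exact ⟨fun h => huv.symm.trans h, fun h => huv.trans h⟩
  set A := Finset.univ.image r with hAdef
  have hA_ne : A.Nonempty := ⟨r (Classical.arbitrary _),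
    Finset.mem_image.mpr ⟨_, Finset.mem_univ _, rfl⟩⟩
  have hrA : ∀ x ∈ A, r x = x := by
    intro x hx
    obtain ⟨u, _, rfl⟩ := Finset.mem_image.mp hx
    exact (hr_eq u (r u) (hr_sc u)).symm
  set l := A.toList with hldef
  have hlne : l ≠ [] := by
    intro hcon
    rw [hldef, Finset.toList_eq_nil] at hcon
    exact hA_ne.ne_empty hcon
  have hlnd : l.Nodup := Finset.nodup_toList A
  have hmeml : ∀ x : Fin N, x ∈ l ↔ x ∈ A := fun x => Finset.mem_toList
  have hpairl : l.Pairwise (fun x y => ¬ σ.SameCycle x y) := by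
    refine List.Pairwise.imp_of_mem ?_ hlnd
    intro x y hx hy hne hsc
    have hx' : r x = x := hrA x ((hmeml x).mp hx)
    have hy' : r y = y := hrA y ((hmeml y).mp hy)
    exact hne (by rw [← hx', ← hy', hr_eq x y hsc])
  have hcover : ∀ v, ∃ x ∈ l, σ.SameCycle x v := fun v =>
    ⟨r v, (hmeml _).mpr (Finset.mem_image.mpr ⟨v, Finset.mem_univ v, rfl⟩), (hr_sc v).symm⟩
  obtain ⟨T, hTcyc, hTfix, hTch⟩ := merge_cycles l σ hlne hlnd hfix hpairl hcover
  have hTsupp : T.support = Finset.univ := by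
    ext v
    simp [Equiv.Perm.mem_support, hTfix v]
  refine ⟨T, ⟨hTcyc, hTsupp⟩, ?_⟩
  have htc : tourCost cost T = ∑ v, cost v (T v) := rfl
  rw [htc]
  -- counting: A.card * g ≤ N
  have hkg : A.card * g ≤ N := by
    have hfib : (Finset.univ : Finset (Fin N)).card =
        ∑ x ∈ A, (Finset.univ.filter (fun v => r v = x)).card :=
      Finset.card_eq_sum_card_fiberwise
        (fun v _ => Finset.mem_image.mpr ⟨v, Finset.mem_univ v, rfl⟩)
    have hlow : ∀ x ∈ A, g ≤ (Finset.univ.filter (fun v => r v = x)).card := by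
      intro x hx
      set m := Function.minimalPeriod (⇑σ) x with hmdef
      have hinj : Set.InjOn (fun i => (σ ^ i) x) (Finset.range m : Set ℕ) := by
        intro i hi j hj hij
        have := Function.iterate_injOn_Iio_minimalPeriod (f := ⇑σ) (x := x)
        simp only [Finset.coe_range] at hi hj
        exact this (by simpa [← hmdef] using hi) (by simpa [← hmdef] using hj)
          (by simpa [Equiv.Perm.iterate_eq_pow] using hij)
      have hsub : (Finset.range m).image (fun i => (σ ^ i) x) ⊆
          Finset.univ.filter (fun v => r v = x) := by
        intro y hy
        obtain ⟨i, _, rfl⟩ := Finset.mem_image.mp hy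
        refine Finset.mem_filter.mpr ⟨Finset.mem_univ _, ?_⟩
        have hsc : σ.SameCycle x ((σ ^ i) x) := ⟨(i : ℤ), by simp [zpow_natCast]⟩
        rw [← hr_eq x ((σ ^ i) x) hsc]
        exact hrA x hx
      calc g ≤ m := hperiod x
        _ = ((Finset.range m).image (fun i => (σ ^ i) x)).card := by
              rw [Finset.card_image_of_injOn hinj, Finset.card_range]
        _ ≤ (Finset.univ.filter (fun v => r v = x)).card := Finset.card_le_card hsub
    calc A.card * g = ∑ _x ∈ A, g := by rw [Finset.sum_const, smul_eq_mul, mul_comm]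
      _ ≤ ∑ x ∈ A, (Finset.univ.filter (fun v => r v = x)).card := Finset.sum_le_sum hlow
      _ = (Finset.univ : Finset (Fin N)).card := hfib.symm
      _ = N := by simp
  -- cost accounting
  set C := Finset.univ.filter (fun v => T v ≠ σ v) with hCdef
  have hCcard : C.card ≤ A.card := by
    have hsub : C ⊆ A.image (⇑σ.symm) := by
      intro v hv
      rw [hCdef, Finset.mem_filter] at hv
      have hσvA : σ v ∈ A := (hmeml _).mp (hTch v hv.2)
      exact Finset.mem_image.mpr ⟨σ v, hσvA, by simp⟩
    calc C.card ≤ (A.image (⇑σ.symm)).card := Finset.card_le_card hsub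
      _ ≤ A.card := Finset.card_image_le
  have hboundv : ∀ v, cost v (T v) ≤ if T v = σ v then 1 else 2 := by
    intro v
    by_cases h : T v = σ v
    · rw [if_pos h, h]
      exact le_of_eq (h1 v (σ v) (hσ v).1)
    · rw [if_neg h]
      by_cases ha : G.Adj v (T v)
      · rw [h1 v _ ha]; norm_num
      · rw [h2 v _ (Ne.symm (hTfix v)) ha]
  have hsum2 : (∑ v, (if T v = σ v then (1:ℝ) else 2)) = N + C.card := by
    have : ∀ v : Fin N, (if T v = σ v then (1:ℝ) else 2) =
        1 + (if T v ≠ σ v then (1:ℝ) else 0) := by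
      intro v
      by_cases h : T v = σ v <;> simp [h] <;> norm_num
    rw [Finset.sum_congr rfl (fun v _ => this v), Finset.sum_add_distrib,
      Finset.sum_const, Finset.sum_ite, Finset.sum_const, Finset.sum_const_zero]
    simp [hCdef]
  have hgpos : (0:ℝ) < g := by
    have : (0:ℕ) < g := by omega
    exact_mod_cast this
  have hAle : (A.card : ℝ) ≤ (N : ℝ) / (g : ℝ) := by
    rw [le_div_iff₀ hgpos]
    exact_mod_cast hkg
  calc (∑ v, cost v (T v)) ≤ ∑ v, (if T v = σ v then (1:ℝ) else 2) :=
        Finset.sum_le_sum (fun v _ => hboundv v)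
    _ = N + C.card := hsum2
    _ ≤ (N : ℝ) + A.card := by
        have : (C.card : ℝ) ≤ A.card := by exact_mod_cast hCcard
        linarith
    _ ≤ (N : ℝ) + (N : ℝ) / (g : ℝ) := by linarith
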